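/- In S = ℝ[x,y,z], the ideal ⟨x,y,z⟩² is generated by the sum of the four ideals J₁ = ⟨y², yz, z²⟩, J₂ = ⟨x², xz, z²⟩, J₃ = ⟨x², xy, y²⟩, J₄ = ⟨(x−z)², (x−z)(y−z), (y−z)²⟩, i.e., J₁ + J₂ + J₃ + J₄ = ⟨x,y,z⟩². -/

import Mathlib

open MvPolynomial

/-- In `S = ℝ[x,y,z]`, with `x = X 0`, `y = X 1`, `z = X 2`:
`J₁ + J₂ + J₃ + J₄ = ⟨x,y,z⟩²`, where `J₁ = ⟨y²,yz,z²⟩`, `J₂ = ⟨x²,xz,z²⟩`,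
`J₃ = ⟨x²,xy,y²⟩`, `J₄ = ⟨(x-z)²,(x-z)(y-z),(y-z)²⟩`. -/
theorem stmt_8 :
    (Ideal.span {(X 1 : MvPolynomial (Fin 3) ℝ) ^ 2, X 1 * X 2, X 2 ^ 2} +
      Ideal.span {(X 0 : MvPolynomial (Fin 3) ℝ) ^ 2, X 0 * X 2, X 2 ^ 2} +
      Ideal.span {(X 0 : MvPolynomial (Fin 3) ℝ) ^ 2, X 0 * X 1, X 1 ^ 2} +
      Ideal.span {((X 0 : MvPolynomial (Fin 3) ℝ) - X 2) ^ 2,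
        (X 0 - X 2) * (X 1 - X 2), (X 1 - X 2) ^ 2}) =
      (Ideal.span {(X 0 : MvPolynomial (Fin 3) ℝ), X 1, X 2}) ^ 2 := by
  set x : MvPolynomial (Fin 3) ℝ := X 0
  set y : MvPolynomial (Fin 3) ℝ := X 1
  set z : MvPolynomial (Fin 3) ℝ := X 2
  clear_value x y z
  have hx : x ∈ Ideal.span {x, y, z} := Ideal.subset_span (by simp)
  have hy : y ∈ Ideal.span {x, y, z} := Ideal.subset_span (by simp)
  have hz : z ∈ Ideal.span {x, y, z} := Ideal.subset_span (by simp)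
  have hxz : x - z ∈ Ideal.span {x, y, z} := Ideal.sub_mem _ hx hz
  have hyz : y - z ∈ Ideal.span {x, y, z} := Ideal.sub_mem _ hy hz
  have hmul : ∀ a b : MvPolynomial (Fin 3) ℝ, a ∈ Ideal.span {x, y, z} →
      b ∈ Ideal.span {x, y, z} → a * b ∈ (Ideal.span {x, y, z}) ^ 2 := by
    intro a b ha hb
    rw [pow_two]
    exact Ideal.mul_mem_mul ha hb
  have hsq : ∀ a : MvPolynomial (Fin 3) ℝ, a ∈ Ideal.span {x, y, z} →
      a ^ 2 ∈ (Ideal.span {x, y, z}) ^ 2 := by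
    intro a ha
    rw [pow_two, pow_two]
    exact Ideal.mul_mem_mul ha ha
  apply le_antisymm
  · refine sup_le (sup_le (sup_le ?_ ?_) ?_) ?_ <;>
      rw [Ideal.span_le] <;> intro p hp <;>
      simp only [Set.mem_insert_iff, Set.mem_singleton_iff] at hp <;>
      rcases hp with h | h | h <;> subst h <;>
      with_reducible_and_instances first
        | exact hsq _ hx
        | exact hsq _ hy
        | exact hsq _ hz
        | exact hmul _ _ hx hy
        | exact hmul _ _ hx hz
        | exact hmul _ _ hy hz
        | exact hsq _ hxz
        | exact hsq _ hyz
        | exact hmul _ _ hxz hyz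
  · -- show ⟨x,y,z⟩² ≤ LHS
    set L := (Ideal.span {y ^ 2, y * z, z ^ 2} +
      Ideal.span {x ^ 2, x * z, z ^ 2} +
      Ideal.span {x ^ 2, x * y, y ^ 2} +
      Ideal.span {(x - z) ^ 2, (x - z) * (y - z), (y - z) ^ 2}) with hL
    have mem1 : ∀ p ∈ ({y ^ 2, y * z, z ^ 2} : Set (MvPolynomial (Fin 3) ℝ)), p ∈ L := by
      intro p hp
      exact Ideal.mem_sup_left (Ideal.mem_sup_left (Ideal.mem_sup_left (Ideal.subset_span hp)))
    have mem2 : ∀ p ∈ ({x ^ 2, x * z, z ^ 2} : Set (MvPolynomial (Fin 3) ℝ)), p ∈ L := by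
      intro p hp
      exact Ideal.mem_sup_left (Ideal.mem_sup_left (Ideal.mem_sup_right (Ideal.subset_span hp)))
    have mem3 : ∀ p ∈ ({x ^ 2, x * y, y ^ 2} : Set (MvPolynomial (Fin 3) ℝ)), p ∈ L := by
      intro p hp
      exact Ideal.mem_sup_left (Ideal.mem_sup_right (Ideal.subset_span hp))
    have hx2 : x ^ 2 ∈ L := mem2 _ (by simp)
    have hy2 : y ^ 2 ∈ L := mem1 _ (by simp)
    have hz2 : z ^ 2 ∈ L := mem1 _ (by simp)
    have hxy : x * y ∈ L := mem3 _ (by simp)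
    have hxz2 : x * z ∈ L := mem2 _ (by simp)
    have hyz2 : y * z ∈ L := mem1 _ (by simp)
    rw [pow_two, Ideal.span_mul_span']
    rw [Ideal.span_le]
    intro p hp
    rw [Set.mem_mul] at hp
    obtain ⟨a, ha, b, hb, rfl⟩ := hp
    simp only [Set.mem_insert_iff, Set.mem_singleton_iff] at ha hb
    rcases ha with rfl | rfl | rfl <;> rcases hb with rfl | rfl | rfl <;>
      first
        | exact (by rw [← pow_two]; assumption)
        | assumption
        | exact (by rw [mul_comm]; assumption)
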